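/- The minimal order of an (m+1)-colored rooted tree with doubling index 𝔡(τ)=k is 2^{k−1} − 1/2, and the minimal trees satisfy the recursion 𝒯_{𝔡,k} = {[τ₁,τ₂]_l : τ₁,τ₂ ∈ 𝒯_{𝔡,k−1}, l ≥ 1}, with ρ_{𝔡,k} = 2ρ_{𝔡,k−1} + 1/2. -/

import Mathlib

inductive CTree (m : ℕ) : Type
  | node : Fin (m + 1) → List (CTree m) → CTree m

namespace CTree

variable {m : ℕ}

def rho : CTree m → ℚ
  | .node l ts => (if (l : ℕ) = 0 then 1 else 1/2) + (ts.attach.map (fun t => rho t.1)).sum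
decreasing_by
  all_goals try simp only [CTree.node.sizeOf_spec, List.cons.sizeOf_spec, List.nil.sizeOf_spec]
  all_goals try have := List.sizeOf_lt_of_mem t.2
  all_goals omega

def height : CTree m → ℕ
  | .node _ ts => 1 + (ts.attach.map (fun t => height t.1)).foldr max 0
decreasing_by
  all_goals try simp only [CTree.node.sizeOf_spec, List.cons.sizeOf_spec, List.nil.sizeOf_spec]
  all_goals try have := List.sizeOf_lt_of_mem t.2
  all_goals omega

def ram : CTree m → ℕ
  | .node _ [] => 1
  | .node _ [t] => ram t
  | .node _ ts => 1 + (ts.attach.map (fun t => ram t.1)).foldr max 0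
decreasing_by
  all_goals try simp only [CTree.node.sizeOf_spec, List.cons.sizeOf_spec, List.nil.sizeOf_spec]
  all_goals try have := List.sizeOf_lt_of_mem t.2
  all_goals omega

def dbl : CTree m → ℕ
  | .node _ [] => 1
  | .node _ ts =>
      let ds := ts.attach.map (fun t => dbl t.1)
      let M := ds.foldr max 0
      if 2 ≤ ds.count M then M + 1 else M
decreasing_by
  all_goals try simp only [CTree.node.sizeOf_spec, List.cons.sizeOf_spec, List.nil.sizeOf_spec]
  all_goals try have := List.sizeOf_lt_of_mem t.2
  all_goals omega


theorem ind' (P : CTree m → Prop) (h : ∀ l ts, (∀ t ∈ ts, P t) → P (node l ts)) : ∀ τ, P τ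
  | .node l ts => h l ts (fun t ht => ind' P h t)
decreasing_by
  all_goals try simp only [CTree.node.sizeOf_spec, List.cons.sizeOf_spec, List.nil.sizeOf_spec]
  all_goals try have := List.sizeOf_lt_of_mem ht
  all_goals omega

lemma rho_node (l : Fin (m+1)) (ts : List (CTree m)) :
    rho (node l ts) = (if (l : ℕ) = 0 then 1 else 1/2) + (ts.map rho).sum := by
  rw [rho, List.attach_map_val]

lemma dbl_nil (l : Fin (m+1)) : dbl (node l [] : CTree m) = 1 := by rw [dbl]

lemma dbl_cons (l : Fin (m+1)) (a : CTree m) (ts : List (CTree m)) :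
    dbl (node l (a :: ts)) =
      if 2 ≤ ((a::ts).map dbl).count (((a::ts).map dbl).foldr max 0)
      then ((a::ts).map dbl).foldr max 0 + 1 else ((a::ts).map dbl).foldr max 0 := by
  rw [dbl, List.attach_map_val]
  simp

lemma le_foldr_max {a : ℕ} : ∀ {l : List ℕ}, a ∈ l → a ≤ l.foldr max 0 := by
  intro l h
  induction l with
  | nil => simp at h
  | cons b t ih =>
    rcases List.mem_cons.1 h with rfl | h
    · exact le_max_left _ _
    · exact le_trans (ih h) (le_max_right _ _)

lemma foldr_max_mem : ∀ (l : List ℕ), l ≠ [] → l.foldr max 0 ∈ l ∨ l.foldr max 0 = 0 := by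
  intro l
  induction l with
  | nil => simp
  | cons b t ih =>
    intro _
    rcases eq_or_ne t [] with rfl | ht
    · simp
    · rcases ih ht with h | h
      · rcases le_or_gt (t.foldr max 0) b with hb | hb
        · left; simp [max_eq_left hb]
        · left; right; rwa [List.foldr_cons, max_eq_right hb.le]
      · rcases Nat.eq_zero_or_pos b with rfl | hb
        · right; simp [h]
        · left
          have : List.foldr max 0 (b :: t) = b := by simp [h]
          rw [this]; exact List.mem_cons_self

lemma half_le_rho : ∀ τ : CTree m, 1/2 ≤ rho τ := by
  refine ind' _ (fun l ts ih => ?_)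
  rw [rho_node]
  have h1 : (1:ℚ)/2 ≤ if (l : ℕ) = 0 then 1 else 1/2 := by split <;> norm_num
  have h2 : 0 ≤ (ts.map rho).sum := by
    apply List.sum_nonneg
    intro x hx
    obtain ⟨t, ht, rfl⟩ := List.mem_map.1 hx
    exact le_trans (by norm_num) (ih t ht)
  linarith

lemma rho_nonneg (τ : CTree m) : 0 ≤ rho τ := le_trans (by norm_num) (half_le_rho τ)

lemma one_le_dbl : ∀ τ : CTree m, 1 ≤ dbl τ := by
  refine ind' _ (fun l ts ih => ?_)
  cases ts with
  | nil => rw [dbl_nil]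
  | cons a t =>
    rw [dbl_cons]
    have : 1 ≤ dbl a := ih a List.mem_cons_self
    have h := le_foldr_max (l := (a::t).map dbl) (List.mem_map_of_mem (f := dbl) (List.mem_cons_self (a := a) (l := t)))
    split <;> omega

/-- key unfolding fact: for nonempty ts, there is `M ∈ ts.map dbl` with properties. -/
lemma dbl_node_spec (l : Fin (m+1)) (a : CTree m) (ts : List (CTree m)) :
    ∃ c ∈ (a :: ts), (∀ t ∈ (a :: ts), dbl t ≤ dbl c) ∧
      ((2 ≤ ((a::ts).map dbl).count (dbl c) ∧ dbl (node l (a::ts)) = dbl c + 1) ∨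
       (¬ 2 ≤ ((a::ts).map dbl).count (dbl c) ∧ dbl (node l (a::ts)) = dbl c)) := by
  set ds := (a::ts).map dbl with hds
  have hne : ds ≠ [] := by simp [hds]
  have hMmem : ds.foldr max 0 ∈ ds := by
    rcases foldr_max_mem ds hne with h | h
    · exact h
    · exfalso
      have : dbl a ≤ ds.foldr max 0 := le_foldr_max (by simp [hds])
      have := one_le_dbl a
      omega
  obtain ⟨c, hc, hcd⟩ := List.mem_map.1 hMmem
  refine ⟨c, hc, fun t ht => hcd ▸ le_foldr_max (List.mem_map_of_mem (f := dbl) ht), ?_⟩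
  rw [dbl_cons, ← hds, hcd]
  split
  · left; exact ⟨by assumption, rfl⟩
  · right; exact ⟨by assumption, rfl⟩


def minT (m : ℕ) : ℕ → CTree m
  | 0 => .node ⟨1 % (m+1), Nat.mod_lt 1 m.succ_pos⟩ []
  | k+1 => .node ⟨1 % (m+1), Nat.mod_lt 1 m.succ_pos⟩ [minT m k, minT m k]

lemma dbl_minT (m k : ℕ) : dbl (minT m k) = k + 1 := by
  induction k with
  | zero => rw [minT, dbl_nil]
  | succ k ih =>
    rw [minT, dbl_cons]
    simp [ih]

lemma rho_minT (m k : ℕ) (hm : 1 ≤ m) : rho (minT m k) = 2^k - 1/2 := by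
  have hl : 1 % (m+1) = 1 := Nat.one_mod_eq_one.2 (by omega)
  induction k with
  | zero => rw [minT, rho_node]; simp [hl]; norm_num
  | succ k ih =>
    rw [minT, rho_node]
    simp only [hl, List.map_cons, List.map_nil, List.sum_cons, List.sum_nil, ih]
    norm_num
    ring

lemma rho_lower : ∀ τ : CTree m, 2^(dbl τ - 1) - 1/2 ≤ rho τ := by
  refine ind' _ (fun l ts ih => ?_)
  have hw : (1:ℚ)/2 ≤ if (l : ℕ) = 0 then 1 else 1/2 := by split <;> norm_num
  cases ts with
  | nil =>
    rw [dbl_nil, rho_node]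
    simp only [List.map_nil, List.sum_nil, add_zero]
    norm_num
    split <;> norm_num
  | cons a t =>
    obtain ⟨c, hc, hmax, hcase⟩ := dbl_node_spec l a t
    rw [rho_node]
    have hnn : ∀ x ∈ (a::t).map rho, 0 ≤ x := by
      intro x hx; obtain ⟨s, _, rfl⟩ := List.mem_map.1 hx; exact rho_nonneg s
    have hc1 : 1 ≤ dbl c := one_le_dbl c
    rcases hcase with ⟨hcnt, hd⟩ | ⟨hcnt, hd⟩
    · -- two children attaining the max
      have hdup : List.Sublist [dbl c, dbl c] ((a::t).map dbl) :=
        List.duplicate_iff_sublist.1 (List.duplicate_iff_two_le_count.2 hcnt)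
      obtain ⟨l', hl', hmap⟩ := List.sublist_map_iff.1 hdup
      have hlen : l'.length = 2 := by
        have := congrArg List.length hmap
        simpa using this.symm
      obtain ⟨x, y, rfl⟩ := List.length_eq_two.mp hlen
      have hx : dbl x = dbl c := by simpa using (congrArg (fun w => w.headI) hmap).symm
      have hy : dbl y = dbl c := by
        simpa using (congrArg (fun w => w.tail.headI) hmap).symm
      have hsub : List.Sublist ([x,y].map rho) ((a::t).map rho) := hl'.map rho
      have hsum : ([x,y].map rho).sum ≤ ((a::t).map rho).sum := hsub.sum_le_sum hnn
      have hxy : ([x,y].map rho).sum = rho x + rho y := by simp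
      rw [hxy] at hsum
      have hrx := ih x (hl'.subset (by simp))
      have hry := ih y (hl'.subset (by simp))
      rw [hx] at hrx; rw [hy] at hry
      have hpow : (2:ℚ)^(dbl c - 1) * 2 = 2^(dbl c) := by
        rw [← pow_succ]
        congr 1
        omega
      have hd1 : dbl (node l (a::t)) - 1 = dbl c := by omega
      rw [hd1]
      linarith
    · -- unique max child
      have hmem : rho c ∈ (a::t).map rho := List.mem_map_of_mem (f := rho) hc
      have hsum := List.single_le_sum hnn _ hmem
      have hrc := ih c hc
      have hd1 : dbl (node l (a::t)) - 1 = dbl c - 1 := by omega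
      rw [hd1]
      linarith


end CTree

open CTree in
theorem stmt8 (m k : ℕ) (hm : 1 ≤ m) (hk : 2 ≤ k) :
    ({τ : CTree m | dbl τ = k ∧ ∀ σ : CTree m, dbl σ = k → rho τ ≤ rho σ}
       = {τ : CTree m | ∃ (l : Fin (m+1)) (σ₁ σ₂ : CTree m) (ts : List (CTree m)),
            1 ≤ (l : ℕ) ∧
            (dbl σ₁ = k - 1 ∧ ∀ σ' : CTree m, dbl σ' = k - 1 → rho σ₁ ≤ rho σ') ∧
            (dbl σ₂ = k - 1 ∧ ∀ σ' : CTree m, dbl σ' = k - 1 → rho σ₂ ≤ rho σ') ∧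
            ts.Perm [σ₁, σ₂] ∧ τ = .node l ts})
    ∧ IsLeast {r : ℚ | ∃ τ : CTree m, dbl τ = k ∧ rho τ = r} ((2 : ℚ) ^ (k - 1) - 1/2)
    ∧ (2 : ℚ) ^ (k - 1) - 1/2 = 2 * ((2 : ℚ) ^ (k - 2) - 1/2) + 1/2 := by
  obtain ⟨j, rfl⟩ : ∃ j, k = j + 2 := ⟨k - 2, by omega⟩
  have e1 : j + 2 - 1 = j + 1 := by omega
  have e2 : j + 2 - 2 = j := by omega
  rw [e1, e2]
  have hminT : dbl (minT m (j+1)) = j + 2 := dbl_minT m (j+1)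
  have hminTrho : rho (minT m (j+1)) = 2^(j+1) - 1/2 := rho_minT m (j+1) hm
  have hminT' : dbl (minT m j) = j + 1 := dbl_minT m j
  have hminT'rho : rho (minT m j) = 2^j - 1/2 := rho_minT m j hm
  have hpow : (2:ℚ)^(j+1) = 2^j * 2 := pow_succ 2 j
  have hlow : ∀ σ : CTree m, dbl σ = j + 2 → 2^(j+1) - (1:ℚ)/2 ≤ rho σ := by
    intro σ hσ
    have := rho_lower σ
    rw [hσ] at this
    simpa using this
  have hlow' : ∀ σ : CTree m, dbl σ = j + 1 → 2^j - (1:ℚ)/2 ≤ rho σ := by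
    intro σ hσ
    have := rho_lower σ
    rw [hσ] at this
    simpa using this
  refine ⟨?_, ⟨⟨minT m (j+1), hminT, hminTrho⟩, ?_⟩, by rw [hpow]; ring⟩
  · ext τ
    simp only [Set.mem_setOf_eq]
    constructor
    · rintro ⟨hdbl, hmin⟩
      have hrho : rho τ = 2^(j+1) - 1/2 := by
        refine le_antisymm ?_ (hlow τ hdbl)
        have := hmin (minT m (j+1)) hminT
        rwa [hminTrho] at this
      obtain ⟨l, ts⟩ := τ
      cases ts with
      | nil => rw [dbl_nil] at hdbl; omega
      | cons a t =>
        obtain ⟨c, hc, hmaxc, hcase⟩ := dbl_node_spec l a t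
        have hw : (1:ℚ)/2 ≤ if (l : ℕ) = 0 then 1 else 1/2 := by split <;> norm_num
        have hnn : ∀ x ∈ (a::t).map rho, 0 ≤ x := by
          intro x hx; obtain ⟨s, _, rfl⟩ := List.mem_map.1 hx; exact rho_nonneg s
        rw [rho_node] at hrho
        rcases hcase with ⟨hcnt, hd⟩ | ⟨hcnt, hd⟩
        · -- two attaining max: dbl c = j + 1
          have hdc : dbl c = j + 1 := by omega
          rw [hdc] at hcnt
          have hdup : List.Sublist [j+1, j+1] ((a::t).map dbl) :=
            List.duplicate_iff_sublist.1 (List.duplicate_iff_two_le_count.2 hcnt)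
          obtain ⟨l', hl', hmap⟩ := List.sublist_map_iff.1 hdup
          have hlen : l'.length = 2 := by
            have := congrArg List.length hmap
            simpa using this.symm
          obtain ⟨x, y, rfl⟩ := List.length_eq_two.mp hlen
          have hx : dbl x = j + 1 := by simpa using (congrArg (fun w => w.headI) hmap).symm
          have hy : dbl y = j + 1 := by
            simpa using (congrArg (fun w => w.tail.headI) hmap).symm
          obtain ⟨rest, hperm⟩ := hl'.exists_perm_append
          have hsum : ((a::t).map rho).sum = rho x + rho y + (rest.map rho).sum := by
            have h' := (hperm.map rho).sum_eq
            simpa [add_assoc] using h'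
          have hrx := hlow' x hx
          have hry := hlow' y hy
          have hrest : 0 ≤ (rest.map rho).sum := by
            apply List.sum_nonneg
            intro z hz; obtain ⟨s, _, rfl⟩ := List.mem_map.1 hz; exact rho_nonneg s
          have hl0 : ¬ ((l : ℕ) = 0) := by
            intro h0
            rw [if_pos h0] at hrho
            linarith
          rw [if_neg hl0] at hrho
          have hrestnil : rest = [] := by
            cases rest with
            | nil => rfl
            | cons r rr =>
              exfalso
              have hmemr : rho r ∈ (r::rr).map rho := List.mem_map_of_mem (f := rho) (by simp)
              have : rho r ≤ ((r::rr).map rho).sum := by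
                apply List.single_le_sum _ _ hmemr
                intro z hz; obtain ⟨s, _, rfl⟩ := List.mem_map.1 hz; exact rho_nonneg s
              have := half_le_rho r
              linarith
          subst hrestnil
          have hxrho : rho x = 2^j - 1/2 := by
            simp only [List.map_nil, List.sum_nil] at hsum
            linarith
          have hyrho : rho y = 2^j - 1/2 := by
            simp only [List.map_nil, List.sum_nil] at hsum
            linarith
          refine ⟨l, x, y, a::t, by omega,
            ⟨hx, fun σ' hσ' => by rw [hxrho]; exact hlow' σ' hσ'⟩,
            ⟨hy, fun σ' hσ' => by rw [hyrho]; exact hlow' σ' hσ'⟩,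
            by simpa using hperm, rfl⟩
        · -- unique max: contradiction
          exfalso
          have hdc : dbl c = j + 2 := by omega
          have hmem : rho c ∈ (a::t).map rho := List.mem_map_of_mem (f := rho) hc
          have hsum := List.single_le_sum hnn _ hmem
          have hrc := hlow c hdc
          linarith
    · rintro ⟨l, σ₁, σ₂, ts, hl1, ⟨hd1, hm1⟩, ⟨hd2, hm2⟩, hperm, rfl⟩
      have hr1 : rho σ₁ = 2^j - 1/2 := by
        refine le_antisymm ?_ (hlow' σ₁ hd1)
        have := hm1 (minT m j) hminT'
        rwa [hminT'rho] at this
      have hr2 : rho σ₂ = 2^j - 1/2 := by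
        refine le_antisymm ?_ (hlow' σ₂ hd2)
        have := hm2 (minT m j) hminT'
        rwa [hminT'rho] at this
      have hds : ts.map dbl = [j+1, j+1] := by
        have h' : (ts.map dbl).Perm [j+1, j+1] := by
          have := hperm.map dbl
          rwa [List.map_cons, List.map_cons, List.map_nil, hd1, hd2] at this
        have h2r : (ts.map dbl).Perm (List.replicate 2 (j+1)) := by
          simpa [List.replicate] using h'
        simpa [List.replicate] using List.perm_replicate.mp h2r
      cases ts with
      | nil => simp at hds
      | cons a t =>
        have hl0 : ¬ ((l : ℕ) = 0) := by omega
        have hdbl : dbl (node l (a::t)) = j + 2 := by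
          rw [dbl_cons, hds]
          simp
        have hrho : rho (node l (a::t)) = 2^(j+1) - 1/2 := by
          rw [rho_node, if_neg hl0]
          have hsum : ((a::t).map rho).sum = rho σ₁ + rho σ₂ := by
            have h' := (hperm.map rho).sum_eq
            simpa using h'
          rw [hsum, hr1, hr2, hpow]
          ring
        exact ⟨hdbl, fun σ hσ => by rw [hrho]; exact hlow σ hσ⟩
  · rintro r ⟨τ, hdbl, rfl⟩
    exact hlow τ hdbl
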